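/- For every well-formed in-place state s (N even, N ≥ 2, ℓ ≥ Nat.clog 2 N, all entries of A and initv strictly less than 2^ℓ) with 2·b < N, the operation extend() produces a state s' with stack pointer b + 1 that is again well-formed, satisfies Zabs s' = Zabs s, and returns a block index k such that k < b + 1, block B_k is unchained in s', and A'[2k] = A'[2k+1] = initv (hence Zabs s' at positions 2k and 2k+1 equals initv). (In words: extending the written area by one block preserves the abstract array contents and yields a freshly initialized, unchained block inside the written area.) -/

import Mathlib

/-- A state of the in-place initializable-array algorithm: the single backing array `A`
of length `N`, a stack pointer `b`, and an initial value `initv`. -/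
structure IPState (N : ℕ) where
  A : Fin N → ℕ
  b : ℕ
  initv : ℕ

namespace IPState

variable {N : ℕ}

/-- Read the backing array at a natural-number position (out-of-range reads return `0`;
all positions actually used by the algorithm are in range). -/
def get (s : IPState N) (x : ℕ) : ℕ :=
  if h : x < N then s.A ⟨x, h⟩ else 0

/-- Write value `v` at natural-number position `x` of the backing array. -/
def set (s : IPState N) (x v : ℕ) : IPState N :=
  { s with A := fun y => if (y : ℕ) = x then v else s.A y }

/-- `chainWith s i` returns `some k` if block `B_i` is chained with block `B_k`
(i.e. `A[2i] = 2k`, `A[2k] = 2i`, the two blocks lie on opposite sides of the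
stack pointer `b`, and both block indices are valid), and `none` otherwise. -/
def chainWith (s : IPState N) (i : ℕ) : Option ℕ :=
  let k' := s.get (2 * i)
  let k := k' / 2
  if k' % 2 = 0 ∧ s.get k' = 2 * i ∧
      (i < s.b ∧ s.b ≤ k ∨ k < s.b ∧ s.b ≤ i) ∧
      2 * i + 1 < N ∧ 2 * k + 1 < N then
    some k
  else
    none

/-- `makeChain s i j` chains block `B_i` with block `B_j`: `A[2i] ← 2j`, `A[2j] ← 2i`. -/
def makeChain (s : IPState N) (i j : ℕ) : IPState N :=
  (s.set (2 * i) (2 * j)).set (2 * j) (2 * i)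

/-- `breakChain s i` breaks the chain of block `B_i` (if any) by rewriting `A[2k] ← 2k`
for the partner block `B_k`. -/
def breakChain (s : IPState N) (i : ℕ) : IPState N :=
  match s.chainWith i with
  | some k => s.set (2 * k) (2 * k)
  | none => s

/-- `initBlock s i` initializes block `B_i` with the initial value:
`A[2i] ← initv`, `A[2i+1] ← initv`. -/
def initBlock (s : IPState N) (i : ℕ) : IPState N :=
  (s.set (2 * i) s.initv).set (2 * i + 1) s.initv

/-- `extend` extends the written area by one block and returns (the new state and the
index of) a block initialized with `(initv, initv)` lying in the written area. -/
def extend (s : IPState N) : IPState N × ℕ :=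
  match s.chainWith s.b with
  | none =>
      let s1 : IPState N := { s with b := s.b + 1 }
      ((s1.initBlock s.b).breakChain s.b, s.b)
  | some k =>
      let s1 : IPState N := { s with b := s.b + 1 }
      -- overwrite block `B_{b-1}` with its abstract values, keeping `A[2(b-1)+1]`
      let s2 := s1.set (2 * s.b) (s1.get (2 * k + 1))
      let s3 := s2.breakChain s.b
      ((s3.initBlock k).breakChain k, k)

/-- The abstraction: the contents of the abstract initializable array represented by
the in-place state. -/
def Zabs (s : IPState N) (x : Fin N) : ℕ :=
  let i := (x : ℕ) / 2
  match s.chainWith i with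
  | some k =>
      if i < s.b then s.initv
      else if (x : ℕ) % 2 = 0 then s.get (2 * k + 1) else s.A x
  | none =>
      if i < s.b then s.A x else s.initv

/-- Step (W): write `v` at position `i` and break any accidental chain of its block. -/
def wstep (s : IPState N) (i : Fin N) (v : ℕ) : IPState N :=
  (s.set (i : ℕ) v).breakChain ((i : ℕ) / 2)

/-- Step (U): for a position `i` in a block chained with `B_k` in the unwritten area,
write `v` at the corresponding stored position. -/
def ustep (s : IPState N) (i : Fin N) (v k : ℕ) : IPState N :=
  if (i : ℕ) % 2 = 0 then s.set (2 * k + 1) v else s.set (i : ℕ) v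

/-- The write operation of the in-place algorithm (Algorithm 3). -/
def iwrite (s : IPState N) (i : Fin N) (v : ℕ) : IPState N :=
  let i' := (i : ℕ) / 2
  if i' < s.b then
    match s.chainWith i' with
    | none => s.wstep i v
    | some k =>
        let p := s.extend
        let s1 := p.1
        let j := p.2
        if j = i' then s1.wstep i v
        else
          -- exchange `B_{i'}` with `B_j`
          let s2 := (s1.set (2 * j) (s1.get (2 * i'))).set (2 * j + 1) (s1.get (2 * i' + 1))
          let s3 := s2.makeChain j k
          let s4 := s3.initBlock i'
          s4.wstep i v
  else
    match s.chainWith i' with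
    | some k => s.ustep i v k
    | none =>
        let p := s.extend
        let s1 := p.1
        let k := p.2
        if k = i' then s1.wstep i v
        else
          let s2 := s1.initBlock i'
          let s3 := s2.makeChain k i'
          s3.ustep i v k

/-- The read operation of the in-place algorithm (Algorithm 2). -/
def iread (s : IPState N) (i : Fin N) : ℕ :=
  let i' := (i : ℕ) / 2
  if (i : ℕ) < 2 * s.b then
    match s.chainWith i' with
    | some _ => s.initv
    | none => s.A i
  else
    match s.chainWith i' with
    | some _ => if (i : ℕ) % 2 = 0 then s.get (s.A i + 1) else s.A i
    | none => s.initv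

/-- The init operation of the in-place algorithm: set `b ← 0` and `initv ← v`,
leaving `A` unchanged. -/
def iinit (s : IPState N) (v : ℕ) : IPState N :=
  { s with b := 0, initv := v }

/-- Well-formedness of an in-place state with element size `ℓ`: all entries of `A`
and the initial value are `ℓ`-bit values, and the written area fits in the array. -/
def WF (ℓ : ℕ) (s : IPState N) : Prop :=
  (∀ x : Fin N, s.A x < 2 ^ ℓ) ∧ s.initv < 2 ^ ℓ ∧ 2 * s.b ≤ N

end IPState

namespace IPState

variable {N : ℕ}

lemma get_set (s : IPState N) (x v y : ℕ) :
    (s.set x v).get y = if y = x ∧ y < N then v else s.get y := by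
  unfold get set
  by_cases h : y < N
  · by_cases hxy : y = x
    · subst hxy; simp [h]
    · simp [h, hxy]
  · simp [h]

lemma get_coe (s : IPState N) (x : Fin N) : s.get (x : ℕ) = s.A x := by
  unfold get
  exact dif_pos x.isLt

lemma get_lt {ℓ : ℕ} {s : IPState N} (hs : s.WF ℓ) (y : ℕ) : s.get y < 2 ^ ℓ := by
  unfold get
  split
  · exact hs.1 _
  · exact Nat.pow_pos (by norm_num)

lemma chainWith_eq_some_iff (s : IPState N) (i j : ℕ) :
    s.chainWith i = some j ↔ s.get (2*i) = 2*j ∧ s.get (2*j) = 2*i ∧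
      ((i < s.b ∧ s.b ≤ j) ∨ (j < s.b ∧ s.b ≤ i)) ∧ 2*i+1 < N ∧ 2*j+1 < N := by
  unfold chainWith
  simp only []
  split_ifs with h
  · obtain ⟨h0, h1, h2, h3, h4⟩ := h
    have hgg : 2 * (s.get (2*i) / 2) = s.get (2*i) := by omega
    simp only [Option.some.injEq]
    constructor
    · rintro rfl
      refine ⟨hgg.symm, by rwa [hgg], h2, h3, h4⟩
    · rintro ⟨hj, -, -, -, -⟩
      omega
  · constructor
    · intro h'; simp at h'
    · rintro ⟨hj, h1, h2, h3, h4⟩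
      exfalso; apply h
      have hji : s.get (2*i) / 2 = j := by omega
      refine ⟨by omega, ?_, ?_, h3, ?_⟩
      · rw [hj]; exact h1
      · rw [hji]; exact h2
      · rw [hji]; exact h4

lemma chainWith_eq_none_iff (s : IPState N) (i : ℕ) :
    s.chainWith i = none ↔ ∀ j, ¬ (s.get (2*i) = 2*j ∧ s.get (2*j) = 2*i ∧
      ((i < s.b ∧ s.b ≤ j) ∨ (j < s.b ∧ s.b ≤ i)) ∧ 2*i+1 < N ∧ 2*j+1 < N) := by
  constructor
  · intro h j hc
    have := (chainWith_eq_some_iff s i j).mpr hc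
    rw [h] at this; exact nomatch this
  · intro h
    rcases hc : s.chainWith i with _ | j
    · rfl
    · exact absurd ((chainWith_eq_some_iff s i j).mp hc) (h j)

lemma Zabs_of_some (s : IPState N) (x : Fin N) (j : ℕ)
    (h : s.chainWith ((x : ℕ) / 2) = some j) :
    s.Zabs x = if (x : ℕ) / 2 < s.b then s.initv
      else if (x : ℕ) % 2 = 0 then s.get (2*j+1) else s.get (x : ℕ) := by
  simp only [Zabs, h]
  rw [get_coe]

lemma Zabs_of_none (s : IPState N) (x : Fin N)
    (h : s.chainWith ((x : ℕ) / 2) = none) :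
    s.Zabs x = if (x : ℕ) / 2 < s.b then s.get (x : ℕ) else s.initv := by
  simp only [Zabs, h]
  rw [get_coe]

lemma extend_aux_none (ℓ : ℕ) (s u : IPState N) (f : ℕ → Prop) [DecidablePred f]
    (hs : s.WF ℓ) (hN2 : N ≤ 2 ^ ℓ) (hb1 : 2 * s.b + 1 < N)
    (hA : s.chainWith s.b = none)
    (hub : u.b = s.b + 1) (hui : u.initv = s.initv)
    (hgu : ∀ y, u.get y = if y = 2 * s.b ∨ y = 2 * s.b + 1 then s.initv
        else if f y then y else s.get y)
    (hf4 : ∀ y, f y → 2 * s.b + 2 ≤ y ∧ y + 1 < N ∧ y % 2 = 0)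
    (hf5 : ∀ y, f y → s.get y = 2 * s.b)
    (hf3 : ∀ j, s.b + 1 ≤ j → 2 * j + 1 < N → s.initv = 2 * j →
        s.get (2 * j) = 2 * s.b → f (2 * j)) :
    u.WF ℓ ∧ u.b = s.b + 1 ∧ u.Zabs = s.Zabs ∧ s.b < s.b + 1 ∧
      u.chainWith s.b = none ∧ u.get (2 * s.b) = s.initv ∧
      u.get (2 * s.b + 1) = s.initv := by
  have hAn := (chainWith_eq_none_iff s s.b).mp hA
  have hfsmall : ∀ y, y < 2 * s.b + 2 → ¬ f y := fun y hy hf => by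
    have := hf4 y hf; omega
  have hfodd : ∀ y, y % 2 = 1 → ¬ f y := fun y hy hf => by
    have := hf4 y hf; omega
  have hgB : u.get (2 * s.b) = s.initv := by rw [hgu]; simp
  have hgB1 : u.get (2 * s.b + 1) = s.initv := by rw [hgu]; simp
  have hgF : ∀ y, f y → u.get y = y := by
    intro y hy; have h4 := hf4 y hy
    rw [hgu, if_neg (by omega), if_pos hy]
  have hgS : ∀ y, ¬(y = 2 * s.b ∨ y = 2 * s.b + 1) → ¬ f y → u.get y = s.get y := by
    intro y h1 h2; rw [hgu, if_neg h1, if_neg h2]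
  have hcub : u.chainWith s.b = none := by
    rw [chainWith_eq_none_iff]
    rintro j ⟨e1, e2, e3, e4, e5⟩
    rw [hub] at e3
    have hj : s.b + 1 ≤ j := by omega
    rw [hgB] at e1
    by_cases hfj : f (2 * j)
    · rw [hgF _ hfj] at e2; omega
    · rw [hgS _ (by omega) hfj] at e2
      exact hfj (hf3 j hj e5 e1 e2)
  refine ⟨⟨?_, by rw [hui]; exact hs.2.1, by rw [hub]; omega⟩, hub, ?_, by omega,
    hcub, hgB, hgB1⟩
  · intro x
    have hx : (x : ℕ) < N := x.isLt
    have hAx : u.A x = u.get (x : ℕ) := (get_coe u x).symm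
    rw [hAx, hgu]
    split_ifs with h1 h2
    · exact hs.2.1
    · have := hf4 _ h2; omega
    · exact get_lt hs _
  · funext x
    have hxN : (x : ℕ) < N := x.isLt
    have hxi : (x : ℕ) = 2 * ((x:ℕ)/2) ∨ (x : ℕ) = 2 * ((x:ℕ)/2) + 1 := by omega
    rcases Nat.lt_trichotomy ((x:ℕ)/2) s.b with hib | hib | hib
    · -- i < b
      rcases hcs : s.chainWith ((x:ℕ)/2) with _ | j
      · have hcu : u.chainWith ((x:ℕ)/2) = none := by
          rw [chainWith_eq_none_iff]
          rintro j ⟨e1, e2, e3, e4, e5⟩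
          rw [hub] at e3
          have hj : s.b + 1 ≤ j := by omega
          rw [hgS _ (by omega) (hfsmall _ (by omega))] at e1
          by_cases hfj : f (2 * j)
          · rw [hgF _ hfj] at e2; omega
          · rw [hgS _ (by omega) hfj] at e2
            exact absurd ((chainWith_eq_some_iff s _ j).mpr
              ⟨e1, e2, Or.inl ⟨hib, by omega⟩, e4, e5⟩) (by simp [hcs])
        rw [Zabs_of_none u x hcu, Zabs_of_none s x hcs,
          if_pos (by omega), if_pos hib]
        rcases hxi with hx | hx <;> rw [hx]
        · exact hgS _ (by omega) (hfsmall _ (by omega))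
        · exact hgS _ (by omega) (hfsmall _ (by omega))
      · obtain ⟨e1, e2, e3, e4, e5⟩ := (chainWith_eq_some_iff s _ j).mp hcs
        have hjb : s.b ≤ j := by omega
        have hjb1 : s.b + 1 ≤ j := by
          rcases Nat.eq_or_lt_of_le hjb with h | h
          · exfalso
            apply hAn ((x:ℕ)/2)
            refine ⟨?_, ?_, Or.inr ⟨hib, le_refl _⟩, hb1, e4⟩
            · rw [h]; exact e2
            · rw [e1, h]
          · omega
        have hfj : ¬ f (2 * j) := fun hf => by
          have := hf5 _ hf; rw [e2] at this; omega
        have hcu : u.chainWith ((x:ℕ)/2) = some j := by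
          rw [chainWith_eq_some_iff]
          refine ⟨?_, ?_, Or.inl ⟨by omega, by omega⟩, e4, e5⟩
          · rw [hgS _ (by omega) (hfsmall _ (by omega))]; exact e1
          · rw [hgS _ (by omega) hfj]; exact e2
        rw [Zabs_of_some u x j hcu, Zabs_of_some s x j hcs,
          if_pos (by omega), if_pos hib, hui]
    · -- i = b
      rw [Zabs_of_none u x (by rw [hib]; exact hcub),
        Zabs_of_none s x (by rw [hib]; exact hA),
        if_pos (by omega), if_neg (by omega)]
      rw [hib] at hxi
      rcases hxi with hx | hx <;> rw [hx]
      · exact hgB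
      · exact hgB1
    · -- i > b
      by_cases hfx : f (2 * ((x:ℕ)/2))
      · have h4 := hf4 _ hfx
        have hcu : u.chainWith ((x:ℕ)/2) = none := by
          rw [chainWith_eq_none_iff]
          rintro j ⟨e1, e2, e3, e4, e5⟩
          rw [hgF _ hfx] at e1
          rw [hub] at e3
          omega
        have hcs : s.chainWith ((x:ℕ)/2) = none := by
          rw [chainWith_eq_none_iff]
          rintro j ⟨e1, e2, e3, e4, e5⟩
          rw [hf5 _ hfx] at e1
          omega
        rw [Zabs_of_none u x hcu, Zabs_of_none s x hcs,
          if_neg (by omega), if_neg (by omega), hui]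
      · rcases hcs : s.chainWith ((x:ℕ)/2) with _ | j
        · have hcu : u.chainWith ((x:ℕ)/2) = none := by
            rw [chainWith_eq_none_iff]
            rintro j ⟨e1, e2, e3, e4, e5⟩
            rw [hub] at e3
            have hj : j ≤ s.b := by omega
            rw [hgS _ (by omega) hfx] at e1
            rcases Nat.eq_or_lt_of_le hj with h | h
            · subst h
              rw [hgB] at e2
              exact hfx (hf3 _ (by omega) e4 e2 (by rw [e1]))
            · rw [hgS _ (by omega) (hfsmall _ (by omega))] at e2
              exact absurd ((chainWith_eq_some_iff s _ j).mpr
                ⟨e1, e2, Or.inr ⟨h, by omega⟩, e4, e5⟩) (by simp [hcs])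
          rw [Zabs_of_none u x hcu, Zabs_of_none s x hcs,
            if_neg (by omega), if_neg (by omega), hui]
        · obtain ⟨e1, e2, e3, e4, e5⟩ := (chainWith_eq_some_iff s _ j).mp hcs
          have hj : j < s.b := by omega
          have hcu : u.chainWith ((x:ℕ)/2) = some j := by
            rw [chainWith_eq_some_iff]
            refine ⟨?_, ?_, Or.inr ⟨by omega, by omega⟩, e4, e5⟩
            · rw [hgS _ (by omega) hfx]; exact e1
            · rw [hgS _ (by omega) (hfsmall _ (by omega))]; exact e2
          rw [Zabs_of_some u x j hcu, Zabs_of_some s x j hcs, hub]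
          rw [if_neg (show ¬ ((x:ℕ)/2 < s.b + 1) by omega),
            if_neg (show ¬ ((x:ℕ)/2 < s.b) by omega)]
          by_cases hpar : (x:ℕ) % 2 = 0
          · rw [if_pos hpar, if_pos hpar]
            exact hgS _ (by omega) (hfsmall _ (by omega))
          · rw [if_neg hpar, if_neg hpar]
            exact hgS _ (by omega) (hfodd _ (by omega))

lemma extend_aux_some (ℓ : ℕ) (s u : IPState N) (k : ℕ) (f : ℕ → Prop) [DecidablePred f]
    (hs : s.WF ℓ) (hN2 : N ≤ 2 ^ ℓ) (hb1 : 2 * s.b + 1 < N)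
    (hk : k < s.b) (hk1 : s.get (2 * s.b) = 2 * k) (hk2 : s.get (2 * k) = 2 * s.b)
    (hkN : 2 * k + 1 < N)
    (hub : u.b = s.b + 1) (hui : u.initv = s.initv)
    (hgu : ∀ y, u.get y = if y = 2 * k ∨ y = 2 * k + 1 then s.initv
        else if y = 2 * s.b then s.get (2 * k + 1) else if f y then y else s.get y)
    (hf4 : ∀ y, f y → 2 * s.b + 2 ≤ y ∧ y + 1 < N ∧ y % 2 = 0)
    (hf5 : ∀ y, f y → s.get y = 2 * s.b ∨ s.get y = 2 * k)
    (hf2 : ∀ j, s.b + 1 ≤ j → 2 * j + 1 < N → s.get (2 * k + 1) = 2 * j →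
        s.get (2 * j) = 2 * s.b → f (2 * j))
    (hf3 : ∀ j, s.b + 1 ≤ j → 2 * j + 1 < N → s.initv = 2 * j →
        s.get (2 * j) = 2 * k → f (2 * j)) :
    u.WF ℓ ∧ u.b = s.b + 1 ∧ u.Zabs = s.Zabs ∧ k < s.b + 1 ∧
      u.chainWith k = none ∧ u.get (2 * k) = s.initv ∧
      u.get (2 * k + 1) = s.initv := by
  have hfsmall : ∀ y, y < 2 * s.b + 2 → ¬ f y := fun y hy hf => by
    have := hf4 y hf; omega
  have hfodd : ∀ y, y % 2 = 1 → ¬ f y := fun y hy hf => by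
    have := hf4 y hf; omega
  have hgK : u.get (2 * k) = s.initv := by rw [hgu]; simp
  have hgK1 : u.get (2 * k + 1) = s.initv := by rw [hgu]; simp
  have hgB : u.get (2 * s.b) = s.get (2 * k + 1) := by
    rw [hgu, if_neg (by omega), if_pos rfl]
  have hgF : ∀ y, f y → u.get y = y := by
    intro y hy; have h4 := hf4 y hy
    rw [hgu, if_neg (by omega), if_neg (by omega), if_pos hy]
  have hgS : ∀ y, ¬(y = 2 * k ∨ y = 2 * k + 1) → y ≠ 2 * s.b → ¬ f y →
      u.get y = s.get y := by
    intro y h1 h2 h3; rw [hgu, if_neg h1, if_neg h2, if_neg h3]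
  have hcsb : s.chainWith s.b = some k :=
    (chainWith_eq_some_iff s s.b k).mpr ⟨hk1, hk2, Or.inr ⟨hk, le_refl _⟩, hb1, hkN⟩
  have hcsk : s.chainWith k = some s.b :=
    (chainWith_eq_some_iff s k s.b).mpr ⟨hk2, hk1, Or.inl ⟨hk, le_refl _⟩, hkN, hb1⟩
  have hcuk : u.chainWith k = none := by
    rw [chainWith_eq_none_iff]
    rintro j ⟨e1, e2, e3, e4, e5⟩
    rw [hub] at e3
    have hj : s.b + 1 ≤ j := by omega
    rw [hgK] at e1
    by_cases hfj : f (2 * j)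
    · rw [hgF _ hfj] at e2; omega
    · rw [hgS _ (by omega) (by omega) hfj] at e2
      exact hfj (hf3 j hj e5 e1 e2)
  have hcub : u.chainWith s.b = none := by
    rw [chainWith_eq_none_iff]
    rintro j ⟨e1, e2, e3, e4, e5⟩
    rw [hub] at e3
    have hj : s.b + 1 ≤ j := by omega
    rw [hgB] at e1
    by_cases hfj : f (2 * j)
    · rw [hgF _ hfj] at e2; omega
    · rw [hgS _ (by omega) (by omega) hfj] at e2
      exact hfj (hf2 j hj e5 e1 e2)
  refine ⟨⟨?_, by rw [hui]; exact hs.2.1, by rw [hub]; omega⟩, hub, ?_, by omega,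
    hcuk, hgK, hgK1⟩
  · intro x
    have hx : (x : ℕ) < N := x.isLt
    have hAx : u.A x = u.get (x : ℕ) := (get_coe u x).symm
    rw [hAx, hgu]
    split_ifs with h1 h2 h3
    · exact hs.2.1
    · exact get_lt hs _
    · have := hf4 _ h3; omega
    · exact get_lt hs _
  · funext x
    have hxN : (x : ℕ) < N := x.isLt
    have hxi : (x : ℕ) = 2 * ((x:ℕ)/2) ∨ (x : ℕ) = 2 * ((x:ℕ)/2) + 1 := by omega
    rcases Nat.lt_trichotomy ((x:ℕ)/2) s.b with hib | hib | hib
    · -- i < b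
      by_cases hik : (x:ℕ)/2 = k
      · rw [Zabs_of_none u x (by rw [hik]; exact hcuk),
          Zabs_of_some s x s.b (by rw [hik]; exact hcsk),
          if_pos (show (x:ℕ)/2 < u.b by omega), if_pos hib]
        rw [hik] at hxi
        rcases hxi with hx | hx <;> rw [hx]
        · exact hgK
        · exact hgK1
      · rcases hcs : s.chainWith ((x:ℕ)/2) with _ | j
        · have hcu : u.chainWith ((x:ℕ)/2) = none := by
            rw [chainWith_eq_none_iff]
            rintro j ⟨e1, e2, e3, e4, e5⟩
            rw [hub] at e3
            have hj : s.b + 1 ≤ j := by omega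
            rw [hgS _ (by omega) (by omega) (hfsmall _ (by omega))] at e1
            by_cases hfj : f (2 * j)
            · rw [hgF _ hfj] at e2; omega
            · rw [hgS _ (by omega) (by omega) hfj] at e2
              exact absurd ((chainWith_eq_some_iff s _ j).mpr
                ⟨e1, e2, Or.inl ⟨hib, by omega⟩, e4, e5⟩) (by simp [hcs])
          rw [Zabs_of_none u x hcu, Zabs_of_none s x hcs,
            if_pos (show (x:ℕ)/2 < u.b by omega), if_pos hib]
          rcases hxi with hx | hx <;> rw [hx]
          · exact hgS _ (by omega) (by omega) (hfsmall _ (by omega))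
          · exact hgS _ (by omega) (by omega) (hfsmall _ (by omega))
        · obtain ⟨e1, e2, e3, e4, e5⟩ := (chainWith_eq_some_iff s _ j).mp hcs
          have hjb : s.b ≤ j := by omega
          have hjb1 : s.b + 1 ≤ j := by
            rcases Nat.eq_or_lt_of_le hjb with h | h
            · exfalso
              rw [← h] at e2
              rw [hk1] at e2
              omega
            · omega
          have hfj : ¬ f (2 * j) := fun hf => by
            rcases hf5 _ hf with h5 | h5 <;> rw [e2] at h5 <;> omega
          have hcu : u.chainWith ((x:ℕ)/2) = some j := by
            rw [chainWith_eq_some_iff]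
            refine ⟨?_, ?_, Or.inl ⟨by omega, by omega⟩, e4, e5⟩
            · rw [hgS _ (by omega) (by omega) (hfsmall _ (by omega))]; exact e1
            · rw [hgS _ (by omega) (by omega) hfj]; exact e2
          rw [Zabs_of_some u x j hcu, Zabs_of_some s x j hcs,
            if_pos (show (x:ℕ)/2 < u.b by omega), if_pos hib, hui]
    · -- i = b
      rw [Zabs_of_none u x (by rw [hib]; exact hcub),
        Zabs_of_some s x k (by rw [hib]; exact hcsb),
        if_pos (show (x:ℕ)/2 < u.b by omega),
        if_neg (show ¬ ((x:ℕ)/2 < s.b) by omega)]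
      rw [hib] at hxi
      rcases hxi with hx | hx
      · rw [if_pos (show (x:ℕ) % 2 = 0 by omega), hx]
        exact hgB
      · rw [if_neg (show ¬ ((x:ℕ) % 2 = 0) by omega), hx]
        exact hgS _ (by omega) (by omega) (hfodd _ (by omega))
    · -- i > b
      by_cases hfx : f (2 * ((x:ℕ)/2))
      · have h4 := hf4 _ hfx
        have hcu : u.chainWith ((x:ℕ)/2) = none := by
          rw [chainWith_eq_none_iff]
          rintro j ⟨e1, e2, e3, e4, e5⟩
          rw [hgF _ hfx] at e1
          rw [hub] at e3
          omega
        have hcs : s.chainWith ((x:ℕ)/2) = none := by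
          rw [chainWith_eq_none_iff]
          rintro j ⟨e1, e2, e3, e4, e5⟩
          rcases hf5 _ hfx with h5 | h5 <;> rw [h5] at e1
          · have : j = s.b := by omega
            subst this
            rw [hk1] at e2
            omega
          · have : j = k := by omega
            subst this
            rw [hk2] at e2
            omega
        rw [Zabs_of_none u x hcu, Zabs_of_none s x hcs,
          if_neg (show ¬ ((x:ℕ)/2 < u.b) by omega),
          if_neg (show ¬ ((x:ℕ)/2 < s.b) by omega), hui]
      · rcases hcs : s.chainWith ((x:ℕ)/2) with _ | j
        · have hcu : u.chainWith ((x:ℕ)/2) = none := by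
            rw [chainWith_eq_none_iff]
            rintro j ⟨e1, e2, e3, e4, e5⟩
            rw [hub] at e3
            have hj : j ≤ s.b := by omega
            rw [hgS _ (by omega) (by omega) hfx] at e1
            by_cases hjb : j = s.b
            · subst hjb
              rw [hgB] at e2
              exact hfx (hf2 _ (by omega) e4 e2 (by rw [e1]))
            · by_cases hjk : j = k
              · subst hjk
                rw [hgK] at e2
                exact hfx (hf3 _ (by omega) e4 e2 (by rw [e1]))
              · rw [hgS _ (by omega) (by omega) (hfsmall _ (by omega))] at e2
                exact absurd ((chainWith_eq_some_iff s _ j).mpr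
                  ⟨e1, e2, Or.inr ⟨by omega, by omega⟩, e4, e5⟩) (by simp [hcs])
          rw [Zabs_of_none u x hcu, Zabs_of_none s x hcs,
            if_neg (show ¬ ((x:ℕ)/2 < u.b) by omega),
            if_neg (show ¬ ((x:ℕ)/2 < s.b) by omega), hui]
        · obtain ⟨e1, e2, e3, e4, e5⟩ := (chainWith_eq_some_iff s _ j).mp hcs
          have hj : j < s.b := by omega
          have hjk : j ≠ k := fun h => by
            rw [h, hk2] at e2
            omega
          have hcu : u.chainWith ((x:ℕ)/2) = some j := by
            rw [chainWith_eq_some_iff]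
            refine ⟨?_, ?_, Or.inr ⟨by omega, by omega⟩, e4, e5⟩
            · rw [hgS _ (by omega) (by omega) hfx]; exact e1
            · rw [hgS _ (by omega) (by omega) (hfsmall _ (by omega))]; exact e2
          rw [Zabs_of_some u x j hcu, Zabs_of_some s x j hcs,
            if_neg (show ¬ ((x:ℕ)/2 < u.b) by omega),
            if_neg (show ¬ ((x:ℕ)/2 < s.b) by omega)]
          by_cases hpar : (x:ℕ) % 2 = 0
          · rw [if_pos hpar, if_pos hpar]
            exact hgS _ (by omega) (by omega) (hfsmall _ (by omega))
          · rw [if_neg hpar, if_neg hpar]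
            exact hgS _ (by omega) (by omega) (hfodd _ (by omega))

end IPState

open IPState

/-- Extending the written area by one block preserves well-formedness and the abstract
array contents, and yields a freshly initialized, unchained block inside the (new)
written area. -/
theorem inplace_extend_correct (N ℓ : ℕ) (hNeven : N % 2 = 0) (hN : 2 ≤ N)
    (hℓ : Nat.clog 2 N ≤ ℓ) (s : IPState N) (hs : s.WF ℓ) (hb : 2 * s.b < N) :
    (s.extend.1).WF ℓ ∧ s.extend.1.b = s.b + 1 ∧ s.extend.1.Zabs = s.Zabs ∧
      s.extend.2 < s.b + 1 ∧
      s.extend.1.chainWith s.extend.2 = none ∧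
      s.extend.1.get (2 * s.extend.2) = s.initv ∧
      s.extend.1.get (2 * s.extend.2 + 1) = s.initv := by
  have hN2 : N ≤ 2 ^ ℓ := (Nat.clog_le_iff_le_pow (b := 2) (by norm_num)).mp hℓ
  have hb1 : 2 * s.b + 1 < N := by omega
  rcases hA : s.chainWith s.b with _ | k
  · -- block B_b unchained: fresh block is B_b itself
    have he : s.extend =
        ((({ s with b := s.b + 1 } : IPState N).initBlock s.b).breakChain s.b, s.b) := by
      unfold IPState.extend
      rw [hA]
    set t := ({ s with b := s.b + 1 } : IPState N).initBlock s.b with htdef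
    have hgt : ∀ y, t.get y = if y = 2*s.b ∨ y = 2*s.b+1 then s.initv else s.get y := by
      intro y
      rw [htdef]
      simp only [IPState.initBlock, get_set]
      split_ifs <;> first | rfl | omega
    rcases hB : t.chainWith s.b with _ | m
    · have hu : t.breakChain s.b = t := by
        unfold IPState.breakChain; rw [hB]
      rw [he, hu]
      refine extend_aux_none ℓ s t (fun _ => False) hs hN2 hb1 hA rfl rfl ?_ ?_ ?_ ?_
      · intro y
        rw [hgt y]
        split_ifs with h1 h2
        · rfl
        · exact h2.elim
        · rfl
      · exact fun y h => h.elim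
      · exact fun y h => h.elim
      · intro j hj hjN hiv hgj
        have hsj : t.chainWith s.b = some j := by
          rw [chainWith_eq_some_iff]
          refine ⟨?_, ?_, ?_, hb1, hjN⟩
          · rw [hgt, if_pos (Or.inl rfl)]; exact hiv
          · rw [hgt, if_neg (by omega)]; exact hgj
          · have htb : t.b = s.b + 1 := rfl
            rw [htb]; omega
        rw [hB] at hsj; exact nomatch hsj
    · obtain ⟨e1, e2, e3, e4, e5⟩ := (chainWith_eq_some_iff t s.b m).mp hB
      rw [hgt, if_pos (Or.inl rfl)] at e1
      have htb : t.b = s.b + 1 := rfl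
      rw [htb] at e3
      have hm : s.b + 1 ≤ m := by omega
      rw [hgt, if_neg (by omega)] at e2
      have hu : t.breakChain s.b = t.set (2*m) (2*m) := by
        unfold IPState.breakChain; rw [hB]
      rw [he, hu]
      refine extend_aux_none ℓ s (t.set (2*m) (2*m)) (fun y => y = 2*m)
        hs hN2 hb1 hA rfl rfl ?_ ?_ ?_ ?_
      · intro y
        rw [get_set, hgt]
        split_ifs <;> omega
      · rintro y rfl
        exact ⟨by omega, by omega, by omega⟩
      · rintro y rfl
        exact e2
      · intro j hj hjN hiv hgj
        show 2*j = 2*m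
        omega
  · -- block B_b chained with B_k
    obtain ⟨ek1, ek2, ek3, ek4, ek5⟩ := (chainWith_eq_some_iff s s.b k).mp hA
    have hk : k < s.b := by omega
    have he : s.extend =
        ((((({ s with b := s.b + 1 } : IPState N).set (2*s.b)
          (({ s with b := s.b + 1 } : IPState N).get (2*k+1))).breakChain s.b).initBlock
            k).breakChain k, k) := by
      unfold IPState.extend
      rw [hA]
    set s2 := ({ s with b := s.b + 1 } : IPState N).set (2*s.b)
      (({ s with b := s.b + 1 } : IPState N).get (2*k+1)) with hs2def
    have hgs2 : ∀ y, s2.get y = if y = 2*s.b then s.get (2*k+1) else s.get y := by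
      intro y
      rw [hs2def, get_set]
      split_ifs <;> first | rfl | omega
    rcases hB : s2.chainWith s.b with _ | m
    · -- no accidental chain at B_b
      have hs3 : s2.breakChain s.b = s2 := by unfold IPState.breakChain; rw [hB]
      rw [he, hs3]
      set s4 := s2.initBlock k with hs4def
      have hgs4 : ∀ y, s4.get y = if y = 2*k ∨ y = 2*k+1 then s.initv
          else if y = 2*s.b then s.get (2*k+1) else s.get y := by
        intro y
        rw [hs4def]
        simp only [IPState.initBlock, get_set, hgs2]
        split_ifs <;> first | rfl | omega
      rcases hC : s4.chainWith k with _ | m'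
      · have hu : s4.breakChain k = s4 := by unfold IPState.breakChain; rw [hC]
        rw [hu]
        refine extend_aux_some ℓ s s4 k (fun _ => False) hs hN2 hb1 hk ek1 ek2 ek5
          rfl rfl ?_ ?_ ?_ ?_ ?_
        · intro y
          rw [hgs4 y]
          split_ifs with h1 h2 h3
          · rfl
          · rfl
          · exact h3.elim
          · rfl
        · exact fun y h => h.elim
        · exact fun y h => h.elim
        · intro j hj hjN hv hgj
          have hsj : s2.chainWith s.b = some j := by
            rw [chainWith_eq_some_iff]
            refine ⟨?_, ?_, ?_, hb1, hjN⟩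
            · rw [hgs2, if_pos rfl]; exact hv
            · rw [hgs2, if_neg (by omega)]; exact hgj
            · have h2b : s2.b = s.b + 1 := rfl
              rw [h2b]; omega
          rw [hB] at hsj; exact nomatch hsj
        · intro j hj hjN hv hgj
          have hsj : s4.chainWith k = some j := by
            rw [chainWith_eq_some_iff]
            refine ⟨?_, ?_, ?_, ek5, hjN⟩
            · rw [hgs4, if_pos (Or.inl rfl)]; exact hv
            · rw [hgs4, if_neg (by omega), if_neg (by omega)]; exact hgj
            · have h4b : s4.b = s.b + 1 := rfl
              rw [h4b]; omega
          rw [hC] at hsj; exact nomatch hsj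
      · obtain ⟨c1, c2, c3, c4, c5⟩ := (chainWith_eq_some_iff s4 k m').mp hC
        have h4b : s4.b = s.b + 1 := rfl
        rw [h4b] at c3
        have hm' : s.b + 1 ≤ m' := by omega
        rw [hgs4, if_pos (Or.inl rfl)] at c1
        rw [hgs4, if_neg (by omega), if_neg (by omega)] at c2
        have hu : s4.breakChain k = s4.set (2*m') (2*m') := by
          unfold IPState.breakChain; rw [hC]
        rw [hu]
        refine extend_aux_some ℓ s _ k (fun y => y = 2*m') hs hN2 hb1 hk ek1 ek2 ek5
          rfl rfl ?_ ?_ ?_ ?_ ?_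
        · intro y
          rw [get_set, hgs4]
          split_ifs <;> omega
        · rintro y rfl
          exact ⟨by omega, by omega, by omega⟩
        · rintro y rfl
          exact Or.inr c2
        · intro j hj hjN hv hgj
          have hsj : s2.chainWith s.b = some j := by
            rw [chainWith_eq_some_iff]
            refine ⟨?_, ?_, ?_, hb1, hjN⟩
            · rw [hgs2, if_pos rfl]; exact hv
            · rw [hgs2, if_neg (by omega)]; exact hgj
            · have h2b : s2.b = s.b + 1 := rfl
              rw [h2b]; omega
          rw [hB] at hsj; exact nomatch hsj
        · intro j hj hjN hv hgj
          have hsj : s4.chainWith k = some j := by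
            rw [chainWith_eq_some_iff]
            refine ⟨?_, ?_, ?_, ek5, hjN⟩
            · rw [hgs4, if_pos (Or.inl rfl)]; exact hv
            · rw [hgs4, if_neg (by omega), if_neg (by omega)]; exact hgj
            · rw [h4b]; omega
          rw [hC] at hsj
          have : m' = j := Option.some.inj hsj
          show 2*j = 2*m'
          omega
    · -- accidental chain of B_b with B_m
      obtain ⟨d1, d2, d3, d4, d5⟩ := (chainWith_eq_some_iff s2 s.b m).mp hB
      have h2b : s2.b = s.b + 1 := rfl
      rw [h2b] at d3
      have hm : s.b + 1 ≤ m := by omega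
      rw [hgs2, if_pos rfl] at d1
      rw [hgs2, if_neg (by omega)] at d2
      have hs3 : s2.breakChain s.b = s2.set (2*m) (2*m) := by
        unfold IPState.breakChain; rw [hB]
      rw [he, hs3]
      set s4 := (s2.set (2*m) (2*m)).initBlock k with hs4def
      have hgs4 : ∀ y, s4.get y = if y = 2*k ∨ y = 2*k+1 then s.initv
          else if y = 2*s.b then s.get (2*k+1) else if y = 2*m then y else s.get y := by
        intro y
        rw [hs4def]
        simp only [IPState.initBlock, get_set, hgs2]
        split_ifs <;> first | rfl | omega
      rcases hC : s4.chainWith k with _ | m'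
      · have hu : s4.breakChain k = s4 := by unfold IPState.breakChain; rw [hC]
        rw [hu]
        refine extend_aux_some ℓ s s4 k (fun y => y = 2*m) hs hN2 hb1 hk ek1 ek2 ek5
          rfl rfl ?_ ?_ ?_ ?_ ?_
        · intro y
          rw [hgs4 y]
        · rintro y rfl
          exact ⟨by omega, by omega, by omega⟩
        · rintro y rfl
          exact Or.inl d2
        · intro j hj hjN hv hgj
          show 2*j = 2*m
          omega
        · intro j hj hjN hv hgj
          have hjm : ¬ (2*j = 2*m) := by
            intro h
            have hjm' : j = m := by omega
            rw [hjm', d2] at hgj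
            omega
          have hsj : s4.chainWith k = some j := by
            rw [chainWith_eq_some_iff]
            refine ⟨?_, ?_, ?_, ek5, hjN⟩
            · rw [hgs4, if_pos (Or.inl rfl)]; exact hv
            · rw [hgs4, if_neg (by omega), if_neg (by omega), if_neg hjm]; exact hgj
            · have h4b : s4.b = s.b + 1 := rfl
              rw [h4b]; omega
          rw [hC] at hsj; exact nomatch hsj
      · obtain ⟨c1, c2, c3, c4, c5⟩ := (chainWith_eq_some_iff s4 k m').mp hC
        have h4b : s4.b = s.b + 1 := rfl
        rw [h4b] at c3
        have hm' : s.b + 1 ≤ m' := by omega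
        rw [hgs4, if_pos (Or.inl rfl)] at c1
        rw [hgs4, if_neg (by omega), if_neg (by omega)] at c2
        have hmm : ¬ (2*m' = 2*m) := by
          intro h
          rw [if_pos h] at c2
          omega
        rw [if_neg hmm] at c2
        have hu : s4.breakChain k = s4.set (2*m') (2*m') := by
          unfold IPState.breakChain; rw [hC]
        rw [hu]
        refine extend_aux_some ℓ s _ k (fun y => y = 2*m ∨ y = 2*m') hs hN2 hb1 hk
          ek1 ek2 ek5 rfl rfl ?_ ?_ ?_ ?_ ?_
        · intro y
          rw [get_set, hgs4]
          split_ifs <;> omega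
        · rintro y (rfl | rfl)
          · exact ⟨by omega, by omega, by omega⟩
          · exact ⟨by omega, by omega, by omega⟩
        · rintro y (rfl | rfl)
          · exact Or.inl d2
          · exact Or.inr c2
        · intro j hj hjN hv hgj
          show 2*j = 2*m ∨ 2*j = 2*m'
          omega
        · intro j hj hjN hv hgj
          show 2*j = 2*m ∨ 2*j = 2*m'
          omega
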